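/- Let d, b be natural numbers, let P₀, …, P_{2b} ⊆ Fin d be pairwise disjoint, for each i let tᵢ : (Fin d → ℝ) → ℤ depend only on the coordinates in Pᵢ and take values in {−1, +1}, and let y ∈ {−1, +1}. Fix x : Fin d → ℝ with tᵢ x = y for all i. Then for every x' with |{j : x j ≠ x' j}| ≤ b, the sign of ∑ᵢ tᵢ x' equals y; in particular ∑ᵢ tᵢ x' ≠ 0 and y · (∑ᵢ tᵢ x') > 0. -/

import Mathlib

/-- A forest of `2b+1` binary (`±1`-valued) trees trained on pairwise disjoint feature
sets, all of which are correct (equal to `y`) on an instance `x`: for any perturbation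
`x'` modifying at most `b` coordinates, the sign of the sum of the tree predictions on
`x'` still equals `y`; in particular the sum is nonzero and `y · (∑ᵢ tᵢ x') > 0`. -/
theorem stmt_7 (d b : ℕ)
    (P : Fin (2 * b + 1) → Set (Fin d))
    (hdisj : ∀ i j, i ≠ j → Disjoint (P i) (P j))
    (t : Fin (2 * b + 1) → (Fin d → ℝ) → ℤ)
    (hdep : ∀ i (x x' : Fin d → ℝ), (∀ j ∈ P i, x j = x' j) → t i x = t i x')
    (hval : ∀ i (x : Fin d → ℝ), t i x = -1 ∨ t i x = 1)
    (y : ℤ) (hy : y = -1 ∨ y = 1)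
    (x : Fin d → ℝ) (hx : ∀ i, t i x = y)
    (x' : Fin d → ℝ)
    (hatk : ({j | x j ≠ x' j} : Set (Fin d)).ncard ≤ b) :
    Int.sign (∑ i, t i x') = y ∧ (∑ i, t i x') ≠ 0 ∧ 0 < y * ∑ i, t i x' := by
  classical
  set S : Set (Fin d) := {j | x j ≠ x' j} with hS
  have hSfin : S.Finite := Set.toFinite S
  set B : Finset (Fin (2*b+1)) := Finset.univ.filter (fun i => t i x' ≠ y) with hBdef
  have hwit : ∀ i ∈ B, ∃ j, j ∈ P i ∧ x j ≠ x' j := by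
    intro i hi
    by_contra h
    push_neg at h
    have heq : t i x = t i x' := hdep i x x' (fun j hj => h j hj)
    have : t i x' = y := by rw [← heq]; exact hx i
    simp [hBdef] at hi
    exact hi this
  choose f hf1 hf2 using hwit
  have hcardb : B.card ≤ b := by
    rcases B.eq_empty_or_nonempty with hBe | ⟨i0, hi0⟩
    · simp [hBe]
    have : Nonempty (Fin d) := ⟨f i0 hi0⟩
    have hcard : B.card ≤ hSfin.toFinset.card := by
      apply Finset.card_le_card_of_injOn
        (fun i => if h : i ∈ B then f i h else Classical.arbitrary _)
      · intro i hi
        simp only [hi, dif_pos]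
        simp only [Set.Finite.mem_toFinset, hS, Set.mem_setOf_eq]
        have hi' : i ∈ B := by simpa using hi
        simpa [hi', hS] using hf2 i hi'
      · intro i hi j hj hij
        simp only [Finset.mem_coe] at hi hj
        simp only [dif_pos hi, dif_pos hj] at hij
        by_contra hne
        have := hdisj i j hne
        have h1 : f i hi ∈ P i := hf1 i hi
        have h2 : f i hi ∈ P j := hij ▸ hf1 j hj
        exact (Set.disjoint_left.mp this h1) h2
    have hS2 : hSfin.toFinset.card = S.ncard := (Set.ncard_eq_toFinset_card S hSfin).symm
    omega
  have hsum : ∑ i, t i x' = ((2*b+1 : ℤ) - 2*B.card) * y := by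
    rw [← Finset.sum_filter_add_sum_filter_not Finset.univ (fun i => t i x' ≠ y)]
    have h1 : ∀ i ∈ Finset.univ.filter (fun i => t i x' ≠ y), t i x' = -y := by
      intro i hi
      simp only [Finset.mem_filter] at hi
      rcases hval i x' with h | h <;> rcases hy with hy' | hy' <;>
        simp_all
    have h2 : ∀ i ∈ Finset.univ.filter (fun i => ¬ t i x' ≠ y), t i x' = y := by
      intro i hi
      simp only [Finset.mem_filter, not_not] at hi
      exact hi.2
    rw [Finset.sum_congr rfl h1, Finset.sum_congr rfl h2, Finset.sum_const, Finset.sum_const]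
    have hc : (Finset.univ.filter (fun i => ¬ t i x' ≠ y)).card
        = (2*b+1) - B.card := by
      rw [hBdef, Finset.filter_not, Finset.card_sdiff_of_subset (Finset.filter_subset _ _)]
      simp
    rw [hc, ← hBdef]
    have hcast : ((2*b+1 - B.card : ℕ) : ℤ) = (2*b+1 : ℤ) - B.card := by
      have hle : B.card ≤ 2*b+1 := le_trans hcardb (by omega)
      omega
    simp only [nsmul_eq_mul, hcast]
    ring
  set m : ℤ := (2*b+1 : ℤ) - 2*B.card with hm
  have hmpos : 0 < m := by
    have : (B.card : ℤ) ≤ b := by exact_mod_cast hcardb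
    simp only [hm]; linarith
  rw [hsum]
  refine ⟨?_, ?_, ?_⟩
  · rw [Int.sign_mul, Int.sign_eq_one_of_pos hmpos, one_mul]
    rcases hy with hy' | hy' <;> simp [hy']
  · rcases hy with hy' | hy' <;> simp [hy'] <;> omega
  · have hyy : y * y = 1 := by rcases hy with hy' | hy' <;> simp [hy']
    calc (0:ℤ) < m := hmpos
      _ = m * (y * y) := by rw [hyy, mul_one]
      _ = y * (m * y) := by ring
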